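/- Let (ξ_n)_{n∈ℤ} be a stationary Markov chain, X_i = f(ξ_i) with f ∈ L^p₀(π), p ≥ 1, and for fixed n define θ_k^n = (1/n)·Σ_{i=0}^{n−1} 𝔼_k(X_k + ⋯ + X_{k+i}), D_k^n = θ_k^n − 𝔼_{k−1}(θ_k^n), and M_n^n = Σ_{i=1}^n D_i^n. Then ‖M_n^n‖_p ≤ ‖S_n‖_p + 3·max_{1≤i≤n} ‖𝔼₀(S_i)‖_p. -/

import Mathlib

open MeasureTheory ProbabilityTheory Filter Finset
open scoped ENNReal NNReal Topology

/-- The σ-algebra `𝓕_k` generated by `ξ_i`, `i ≤ k`. -/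
def pastFiltration {Ω S : Type*} [MeasurableSpace Ω] [MeasurableSpace S]
    (ξ : ℤ → Ω → S) (k : ℤ) : MeasurableSpace Ω :=
  ⨆ i ≤ k, MeasurableSpace.comap (ξ i) inferInstance

/-- Partial sums `S_n = X_1 + ⋯ + X_n` with `X_i = f(ξ_i)`. -/
noncomputable def Spart {Ω S : Type*} (ξ : ℤ → Ω → S) (f : S → ℝ) (n : ℕ) (ω : Ω) : ℝ :=
  ∑ i ∈ Finset.Icc 1 n, f (ξ (i : ℤ) ω)

noncomputable def Vblock {Ω S : Type*} (ξ : ℤ → Ω → S) (f : S → ℝ) (k : ℤ) (m : ℕ)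
    (ω : Ω) : ℝ :=
  ∑ j ∈ Finset.range m, f (ξ ((j : ℤ) + 1 + k) ω)

lemma sum_Icc_cast {M : Type*} [AddCommMonoid M] (n : ℕ) (g : ℤ → M) :
    ∑ i ∈ Finset.Icc 1 n, g (i : ℤ) = ∑ j ∈ Finset.range n, g ((j : ℤ) + 1) := by
  rw [← Finset.Ico_add_one_right_eq_Icc, Finset.sum_Ico_eq_sum_range]
  refine Finset.sum_congr rfl fun j _ => ?_
  congr 1
  push_cast
  ring

def pastPath (S : Type*) [MeasurableSpace S] : MeasurableSpace (ℤ → S) :=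
  ⨆ i ≤ (0 : ℤ), MeasurableSpace.comap (fun x => x i) inferInstance

lemma spart_range {Ω S : Type*} (ξ : ℤ → Ω → S) (f : S → ℝ) (m : ℕ) :
    Spart ξ f m = fun ω => ∑ j ∈ Finset.range m, f (ξ ((j : ℤ) + 1) ω) := by
  funext ω
  unfold Spart
  rw [← Finset.Ico_add_one_right_eq_Icc, Finset.sum_Ico_eq_sum_range]
  refine Finset.sum_congr rfl fun j _ => ?_
  congr 1
  push_cast
  ring_nf

lemma comap_pastPath {Ω S : Type*} [MeasurableSpace Ω] [MeasurableSpace S]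
    (ξ : ℤ → Ω → S) (k : ℤ) :
    MeasurableSpace.comap (fun ω (i : ℤ) => ξ (i + k) ω) (pastPath S) = pastFiltration ξ k := by
  apply le_antisymm
  · rw [pastPath, MeasurableSpace.comap_iSup]
    refine iSup_le fun i => ?_
    rw [MeasurableSpace.comap_iSup]
    refine iSup_le fun hi => ?_
    rw [MeasurableSpace.comap_comp]
    have h1 : ((fun x : ℤ → S => x i) ∘ fun ω (i' : ℤ) => ξ (i' + k) ω) = ξ (i + k) := rfl
    rw [h1, pastFiltration]
    exact le_iSup₂_of_le (i + k) (by omega) le_rfl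
  · rw [pastFiltration]
    refine iSup₂_le fun j hj => ?_
    rw [pastPath, MeasurableSpace.comap_iSup]
    refine le_iSup_of_le (j - k) ?_
    rw [MeasurableSpace.comap_iSup]
    refine le_iSup_of_le (by omega : j - k ≤ 0) ?_
    rw [MeasurableSpace.comap_comp]
    have h1 : ((fun x : ℤ → S => x (j - k)) ∘ fun ω (i' : ℤ) => ξ (i' + k) ω) = ξ j := by
      funext ω
      show ξ (j - k + k) ω = ξ j ω
      rw [show j - k + k = j by omega]
    rw [h1]

lemma comap_pastPath_zero {Ω S : Type*} [MeasurableSpace Ω] [MeasurableSpace S]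
    (ξ : ℤ → Ω → S) :
    MeasurableSpace.comap (fun ω (i : ℤ) => ξ i ω) (pastPath S) = pastFiltration ξ 0 := by
  have h := comap_pastPath ξ 0
  have h2 : (fun ω (i : ℤ) => ξ (i + 0) ω) = fun ω (i : ℤ) => ξ i ω := by
    funext ω i; rw [add_zero]
  rwa [h2] at h

lemma pastPath_le (S : Type*) [MeasurableSpace S] :
    pastPath S ≤ (inferInstance : MeasurableSpace (ℤ → S)) :=
  iSup₂_le fun i _ => (measurable_pi_apply i).comap_le
/-- Conditional expectation commutes with a measurable factor map. -/
lemma condexp_comp_aux {Ω Γ : Type*} [mΩ : MeasurableSpace Ω] (m : MeasurableSpace Γ)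
    [mΓ : MeasurableSpace Γ]
    (P : Measure Ω) [IsProbabilityMeasure P] (T : Ω → Γ) (hT : Measurable T)
    (hm : m ≤ mΓ) (g : Γ → ℝ) (hgm : StronglyMeasurable g)
    (hgi : Integrable g (P.map T)) :
    (fun ω => ((P.map T)[g | m]) (T ω)) =ᵐ[P]
      P[fun ω => g (T ω) | MeasurableSpace.comap T m] := by
  have hTm : @Measurable Ω Γ (MeasurableSpace.comap T m) m T := fun s hs => ⟨s, hs, rfl⟩
  have hcle : MeasurableSpace.comap T m ≤ mΩ := by
    rintro s ⟨B, hB, rfl⟩; exact hT (hm B hB)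
  have hPT : IsProbabilityMeasure (P.map T) := Measure.isProbabilityMeasure_map hT.aemeasurable
  have hce_sm : AEStronglyMeasurable ((P.map T)[g | m]) (P.map T) :=
    (stronglyMeasurable_condExp.mono hm).aestronglyMeasurable
  have hcomp_int : Integrable (fun ω => ((P.map T)[g | m]) (T ω)) P :=
    (integrable_map_measure hce_sm hT.aemeasurable).mp integrable_condExp
  refine ae_eq_condExp_of_forall_setIntegral_eq hcle
    ((integrable_map_measure hgm.aestronglyMeasurable hT.aemeasurable).mp hgi)
    (fun s _ _ => hcomp_int.integrableOn) ?_ ?_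
  · rintro s ⟨B, hB, rfl⟩ -
    have hBm : MeasurableSet B := hm B hB
    calc ∫ x in T ⁻¹' B, ((P.map T)[g | m]) (T x) ∂P
        = ∫ y in B, ((P.map T)[g | m]) y ∂(P.map T) :=
          (setIntegral_map hBm hce_sm hT.aemeasurable).symm
      _ = ∫ y in B, g y ∂(P.map T) := setIntegral_condExp hm hgi hB
      _ = ∫ x in T ⁻¹' B, g (T x) ∂P :=
          setIntegral_map hBm hgm.aestronglyMeasurable hT.aemeasurable
  · exact StronglyMeasurable.aestronglyMeasurable
      (stronglyMeasurable_condExp.comp_measurable hTm)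


lemma map_shift_aux {Ω S : Type*} [MeasurableSpace Ω] [MeasurableSpace S]
    (P : Measure Ω) [IsProbabilityMeasure P] (ξ : ℤ → Ω → S)
    (hmeas : ∀ i, Measurable (ξ i))
    (hstat : ∀ (m : ℕ) (t : Fin m → ℤ) (k : ℤ),
      P.map (fun ω i => ξ (t i + k) ω) = P.map (fun ω (i : Fin m) => ξ (t i) ω))
    (k : ℤ) :
    P.map (fun ω (i : ℤ) => ξ (i + k) ω) = P.map (fun ω (i : ℤ) => ξ i ω) := by
  have hTk : ∀ k : ℤ, Measurable (fun ω (i : ℤ) => ξ (i + k) ω) := fun k =>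
    measurable_pi_lambda _ fun i => hmeas _
  have hT0 : Measurable (fun ω (i : ℤ) => ξ i ω) := measurable_pi_lambda _ fun i => hmeas _
  haveI : IsProbabilityMeasure (P.map (fun ω (i : ℤ) => ξ (i + k) ω)) :=
    Measure.isProbabilityMeasure_map (hTk k).aemeasurable
  haveI : IsProbabilityMeasure (P.map (fun ω (i : ℤ) => ξ i ω)) :=
    Measure.isProbabilityMeasure_map hT0.aemeasurable
  refine ext_of_generate_finite (measurableCylinders (fun _ : ℤ => S))
    generateFrom_measurableCylinders.symm isPiSystem_measurableCylinders ?_ (by simp)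
  rintro s hs
  obtain ⟨J, A, hA, rfl⟩ := (mem_measurableCylinders s).mp hs
  have hrestrict : Measurable (fun x : ℤ → S => (fun i : J => x (i : ℤ))) :=
    measurable_pi_lambda _ fun i => measurable_pi_apply _
  have hcyl : MeasurableSet (cylinder J A) := hrestrict hA
  set e := J.equivFin with he
  set t : Fin J.card → ℤ := fun j => ((e.symm j : J) : ℤ) with ht
  set r : (Fin J.card → S) → (∀ i : J, S) := fun v i => v (e i) with hr
  have hrm : Measurable r := measurable_pi_lambda _ fun i => measurable_pi_apply _
  have hΦ : ∀ k : ℤ, Measurable (fun ω (j : Fin J.card) => ξ (t j + k) ω) := fun k =>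
    measurable_pi_lambda _ fun j => hmeas _
  have hΦ0 : Measurable (fun ω (j : Fin J.card) => ξ (t j) ω) :=
    measurable_pi_lambda _ fun j => hmeas _
  have key : ∀ k : ℤ,
      (fun ω => (fun i : J => ξ ((i : ℤ) + k) ω))
        = r ∘ (fun ω (j : Fin J.card) => ξ (t j + k) ω) := by
    intro k; funext ω; funext i
    simp only [r, Function.comp_apply, t, Equiv.symm_apply_apply]
  have main : ∀ k : ℤ,
      P.map (fun ω (i : ℤ) => ξ (i + k) ω) (cylinder J A)
        = P.map (fun ω (j : Fin J.card) => ξ (t j) ω) (r ⁻¹' A) := by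
    intro k
    rw [Measure.map_apply (hTk k) hcyl]
    have : (fun ω (i : ℤ) => ξ (i + k) ω) ⁻¹' cylinder J A
        = (fun ω (j : Fin J.card) => ξ (t j + k) ω) ⁻¹' (r ⁻¹' A) := by
      ext ω
      simp only [cylinder, Set.mem_preimage, Finset.restrict]
      have hre : J.restrict (fun i => ξ (i + k) ω) = r fun j => ξ (t j + k) ω := by
        funext i; simp [Finset.restrict, r, t]
      rw [hre]
    rw [this, ← Measure.map_apply (hΦ k) (hrm hA), hstat]
  have main0 :
      P.map (fun ω (i : ℤ) => ξ i ω) (cylinder J A)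
        = P.map (fun ω (j : Fin J.card) => ξ (t j) ω) (r ⁻¹' A) := by
    have := main 0
    simpa using this
  rw [main k, main0]

/-- Stationarity transfer: the `L^p` norm of the conditional expectation of a shifted
block sum does not depend on the shift. -/
lemma eLpNorm_condexp_shift {Ω S : Type*} [MeasurableSpace Ω] [MeasurableSpace S]
    (P : Measure Ω) [IsProbabilityMeasure P] (ξ : ℤ → Ω → S)
    (hmeas : ∀ i, Measurable (ξ i))
    (hstat : ∀ (m : ℕ) (t : Fin m → ℤ) (k : ℤ),
      P.map (fun ω i => ξ (t i + k) ω) = P.map (fun ω (i : Fin m) => ξ (t i) ω))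
    (f : S → ℝ) (hf : Measurable f)
    (hint : ∀ i : ℤ, Integrable (fun ω => f (ξ i ω)) P)
    (q : ℝ≥0∞) (k : ℤ) (m : ℕ) :
    eLpNorm (P[Vblock ξ f k m | pastFiltration ξ k]) q P
      = eLpNorm (P[Spart ξ f m | pastFiltration ξ 0]) q P := by
  classical
  set g : (ℤ → S) → ℝ := fun x => ∑ j ∈ Finset.range m, f (x ((j : ℤ) + 1)) with hg
  have hgm : Measurable g :=
    Finset.measurable_sum _ fun j _ => hf.comp (measurable_pi_apply _)
  have hT : ∀ k : ℤ, Measurable (fun ω (i : ℤ) => ξ (i + k) ω) := fun k =>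
    measurable_pi_lambda _ fun i => hmeas _
  have hT0 : Measurable (fun ω (i : ℤ) => ξ i ω) := measurable_pi_lambda _ fun i => hmeas _
  set ν : Measure (ℤ → S) := P.map (fun ω (i : ℤ) => ξ i ω) with hν
  have hshift : ∀ k : ℤ, P.map (fun ω (i : ℤ) => ξ (i + k) ω) = ν := fun k =>
    map_shift_aux P ξ hmeas hstat k
  have hgi : Integrable g ν := by
    rw [hν, integrable_map_measure hgm.aestronglyMeasurable hT0.aemeasurable]
    exact integrable_finset_sum _ fun j _ => hint _
  -- the common value
  have key : ∀ k : ℤ,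
      eLpNorm (P[Vblock ξ f k m | pastFiltration ξ k]) q P
        = eLpNorm (ν[g | pastPath S]) q ν := by
    intro k
    have hcc := condexp_comp_aux (pastPath S) P (fun ω (i : ℤ) => ξ (i + k) ω) (hT k)
      (pastPath_le S) g hgm.stronglyMeasurable (by rw [hshift k]; exact hgi)
    rw [hshift k] at hcc
    rw [comap_pastPath ξ k] at hcc
    have hfun : (fun ω => g ((fun ω' (i : ℤ) => ξ (i + k) ω') ω))
        = Vblock ξ f k m := rfl
    rw [hfun] at hcc
    rw [eLpNorm_congr_ae hcc.symm]
    have := eLpNorm_map_measure (μ := P) (f := fun ω (i : ℤ) => ξ (i + k) ω)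
      (g := ν[g | pastPath S]) (p := q)
      (by rw [hshift k]
          exact (stronglyMeasurable_condExp.mono (pastPath_le S)).aestronglyMeasurable)
      (hT k).aemeasurable
    rw [hshift k] at this
    exact this.symm
  rw [key k]
  -- now the `k = 0` side
  have hcc := condexp_comp_aux (pastPath S) P (fun ω (i : ℤ) => ξ i ω) hT0
    (pastPath_le S) g hgm.stronglyMeasurable (by rw [← hν]; exact hgi)
  rw [← hν, comap_pastPath_zero ξ] at hcc
  have hfun : (fun ω => g ((fun ω' (i : ℤ) => ξ i ω') ω)) = Spart ξ f m := by
    rw [spart_range]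
  rw [hfun] at hcc
  rw [eLpNorm_congr_ae hcc.symm]
  have := eLpNorm_map_measure (μ := P) (f := fun ω (i : ℤ) => ξ i ω)
    (g := ν[g | pastPath S]) (p := q)
    (by rw [← hν]
        exact (stronglyMeasurable_condExp.mono (pastPath_le S)).aestronglyMeasurable)
    hT0.aemeasurable
  rw [← hν] at this
  exact this

/-- `θ_k^n = (1/n) ∑_{i=0}^{n-1} 𝔼_k(X_k + ⋯ + X_{k+i})`. -/
noncomputable def thetaF {Ω S : Type*} [MeasurableSpace Ω] [MeasurableSpace S]
    (P : Measure Ω) (ξ : ℤ → Ω → S) (f : S → ℝ) (n : ℕ) (k : ℤ) (ω : Ω) : ℝ :=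
  (1 / (n : ℝ)) * ∑ i ∈ Finset.range n,
    (P[fun ω' => ∑ j ∈ Finset.range (i + 1), f (ξ (k + (j : ℤ)) ω') |
        pastFiltration ξ k]) ω

/-- `D_k^n = θ_k^n - 𝔼_{k-1}(θ_k^n)`. -/
noncomputable def Dmart {Ω S : Type*} [MeasurableSpace Ω] [MeasurableSpace S]
    (P : Measure Ω) (ξ : ℤ → Ω → S) (f : S → ℝ) (n : ℕ) (k : ℤ) (ω : Ω) : ℝ :=
  thetaF P ξ f n k ω - (P[thetaF P ξ f n k | pastFiltration ξ (k - 1)]) ω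

/-- For a stationary Markov chain and `f ∈ 𝕃^p₀(π)`, `p ≥ 1`, with
`M_n^n = ∑_{i=1}^n D_i^n`: `‖M_n^n‖_p ≤ ‖S_n‖_p + 3 max_{1≤i≤n} ‖𝔼₀(S_i)‖_p`. -/
theorem statement12
    {Ω : Type*} [MeasurableSpace Ω] (P : Measure Ω) [IsProbabilityMeasure P]
    {S : Type*} [MeasurableSpace S]
    (ξ : ℤ → Ω → S) (Q : Kernel S S) [IsMarkovKernel Q] (π : Measure S)
    [IsProbabilityMeasure π]
    (hmeas : ∀ i, Measurable (ξ i))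
    (hmarg : ∀ i, P.map (ξ i) = π)
    (hMarkov : ∀ (k : ℤ) (A : Set S), MeasurableSet A →
      (P[fun ω => Set.indicator A (fun _ => (1 : ℝ)) (ξ (k + 1) ω) | pastFiltration ξ k])
        =ᵐ[P] fun ω => (Q (ξ k ω) A).toReal)
    (hstat : ∀ (m : ℕ) (t : Fin m → ℤ) (k : ℤ),
      P.map (fun ω i => ξ (t i + k) ω) = P.map (fun ω (i : Fin m) => ξ (t i) ω))
    (p : ℝ) (hp : 1 ≤ p)
    (f : S → ℝ) (hf : Measurable f)
    (hfp : MemLp f (ENNReal.ofReal p) π) (hf0 : ∫ x, f x ∂π = 0)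
    (n : ℕ) (hn : 1 ≤ n) :
    eLpNorm (fun ω => ∑ i ∈ Finset.Icc 1 n, Dmart P ξ f n (i : ℤ) ω)
        (ENNReal.ofReal p) P ≤
      eLpNorm (Spart ξ f n) (ENNReal.ofReal p) P +
        3 * (Finset.Icc 1 n).sup
          (fun i => eLpNorm (P[Spart ξ f i | pastFiltration ξ 0]) (ENNReal.ofReal p) P) := by
  classical
  set q := ENNReal.ofReal p with hqdef
  have hq1 : 1 ≤ q := ENNReal.one_le_ofReal.mpr hp
  have hn0 : (n : ℝ) ≠ 0 := Nat.cast_ne_zero.mpr (by omega)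
  have hFle : ∀ k : ℤ, pastFiltration ξ k ≤ (inferInstance : MeasurableSpace Ω) :=
    fun k => iSup₂_le fun i _ => (hmeas i).comap_le
  have hFmono : ∀ j k : ℤ, j ≤ k → pastFiltration ξ j ≤ pastFiltration ξ k :=
    fun j k hjk => iSup₂_le fun i hi => le_iSup₂_of_le i (hi.trans hjk) le_rfl
  have hXi : ∀ i : ℤ, Integrable (fun ω => f (ξ i ω)) P := by
    intro i
    have h1 : Integrable f (P.map (ξ i)) := by rw [hmarg i]; exact hfp.integrable hq1
    exact (integrable_map_measure hf.aestronglyMeasurable (hmeas i).aemeasurable).mp h1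
  have hVint : ∀ (k : ℤ) (m : ℕ), Integrable (Vblock ξ f k m) P :=
    fun k m => integrable_finset_sum _ fun j _ => hXi _
  have hVnorm : ∀ (k : ℤ) (m : ℕ),
      eLpNorm (P[Vblock ξ f k m | pastFiltration ξ k]) q P
        = eLpNorm (P[Spart ξ f m | pastFiltration ξ 0]) q P :=
    fun k m => eLpNorm_condexp_shift P ξ hmeas hstat f hf hXi q k m
  -- splitting the inner block sums
  have hinner1 : ∀ (k : ℤ) (i : ℕ),
      (fun ω' => ∑ j ∈ Finset.range (i + 1), f (ξ (k + (j : ℤ)) ω'))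
        = fun ω => f (ξ k ω) + Vblock ξ f k i ω := by
    intro k i
    funext ω
    rw [Finset.sum_range_succ', add_comm]
    congr 1
    · simp
    · refine Finset.sum_congr rfl fun j _ => ?_
      have h1 : k + ((j + 1 : ℕ) : ℤ) = (j : ℤ) + 1 + k := by push_cast; ring
      rw [h1]
  have hinner2 : ∀ (k : ℤ) (i : ℕ),
      (fun ω' => ∑ j ∈ Finset.range (i + 1), f (ξ (k + (j : ℤ)) ω'))
        = Vblock ξ f (k - 1) (i + 1) := by
    intro k i
    funext ω
    refine Finset.sum_congr rfl fun j _ => ?_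
    have h1 : k + (j : ℤ) = (j : ℤ) + 1 + (k - 1) := by ring
    rw [h1]
  have hXsmF : ∀ k : ℤ, StronglyMeasurable[pastFiltration ξ k] (fun ω => f (ξ k ω)) := by
    intro k
    have hcle : MeasurableSpace.comap (ξ k) inferInstance ≤ pastFiltration ξ k :=
      le_iSup₂_of_le k le_rfl le_rfl
    exact (hf.comp (Measurable.of_comap_le hcle)).stronglyMeasurable
  have hA : ∀ (k : ℤ) (i : ℕ),
      (P[fun ω' => ∑ j ∈ Finset.range (i + 1), f (ξ (k + (j : ℤ)) ω') | pastFiltration ξ k])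
        =ᵐ[P] fun ω => f (ξ k ω) + (P[Vblock ξ f k i | pastFiltration ξ k]) ω := by
    intro k i
    rw [hinner1 k i]
    have h1 : (P[fun ω => f (ξ k ω) + Vblock ξ f k i ω | pastFiltration ξ k])
        =ᵐ[P] P[fun ω => f (ξ k ω) | pastFiltration ξ k]
          + P[Vblock ξ f k i | pastFiltration ξ k] := condExp_add (hXi k) (hVint k i) _
    have h2 : (P[fun ω => f (ξ k ω) | pastFiltration ξ k]) = fun ω => f (ξ k ω) :=
      condExp_of_stronglyMeasurable (hFle k) (hXsmF k) (hXi k)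
    filter_upwards [h1] with ω hω
    rw [hω, Pi.add_apply, h2]
  have htheta : ∀ k : ℤ, thetaF P ξ f n k =ᵐ[P] fun ω => f (ξ k ω)
      + (1 / (n : ℝ)) * ∑ i ∈ Finset.range n,
        (P[Vblock ξ f k i | pastFiltration ξ k]) ω := by
    intro k
    filter_upwards [ae_all_iff.mpr (fun i : ℕ => hA k i)] with ω hω
    show (1 / (n : ℝ)) * ∑ i ∈ Finset.range n, _ = _
    rw [Finset.sum_congr rfl fun i _ => hω i, Finset.sum_add_distrib, Finset.sum_const,
      Finset.card_range, nsmul_eq_mul]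
    field_simp
  have hD1 : ∀ k : ℤ, (P[thetaF P ξ f n k | pastFiltration ξ (k - 1)])
      =ᵐ[P] fun ω => (1 / (n : ℝ)) * ∑ i ∈ Finset.range n,
        (P[Vblock ξ f (k - 1) (i + 1) | pastFiltration ξ (k - 1)]) ω := by
    intro k
    have hthform : thetaF P ξ f n k = (1 / (n : ℝ)) • ∑ i ∈ Finset.range n,
        P[fun ω' => ∑ j ∈ Finset.range (i + 1), f (ξ (k + (j : ℤ)) ω') |
          pastFiltration ξ k] := by
      funext ω
      simp only [thetaF, Pi.smul_apply, Finset.sum_apply, smul_eq_mul]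
    have h0 : (P[thetaF P ξ f n k | pastFiltration ξ (k - 1)])
        =ᵐ[P] (1 / (n : ℝ)) • P[∑ i ∈ Finset.range n,
          P[fun ω' => ∑ j ∈ Finset.range (i + 1), f (ξ (k + (j : ℤ)) ω') |
            pastFiltration ξ k] | pastFiltration ξ (k - 1)] := by
      rw [hthform]
      exact condExp_smul _ _ _
    have h1 : (P[∑ i ∈ Finset.range n,
          P[fun ω' => ∑ j ∈ Finset.range (i + 1), f (ξ (k + (j : ℤ)) ω') |
            pastFiltration ξ k] | pastFiltration ξ (k - 1)])
        =ᵐ[P] ∑ i ∈ Finset.range n,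
          P[P[fun ω' => ∑ j ∈ Finset.range (i + 1), f (ξ (k + (j : ℤ)) ω') |
            pastFiltration ξ k] | pastFiltration ξ (k - 1)] :=
      condExp_finset_sum (fun i _ => integrable_condExp) _
    have h2 : ∀ i : ℕ,
        (P[P[fun ω' => ∑ j ∈ Finset.range (i + 1), f (ξ (k + (j : ℤ)) ω') |
            pastFiltration ξ k] | pastFiltration ξ (k - 1)])
          =ᵐ[P] P[Vblock ξ f (k - 1) (i + 1) | pastFiltration ξ (k - 1)] := by
      intro i
      refine (condExp_condExp_of_le (hFmono _ _ (by omega)) (hFle k)).trans ?_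
      rw [hinner2 k i]
    filter_upwards [h0, h1, ae_all_iff.mpr h2] with ω e0 e1 e2
    rw [e0, Pi.smul_apply, smul_eq_mul, e1, Finset.sum_apply]
    congr 1
    exact Finset.sum_congr rfl fun i _ => e2 i
  have hD : ∀ k : ℤ, (fun ω => Dmart P ξ f n k ω) =ᵐ[P] fun ω =>
      thetaF P ξ f n k ω - thetaF P ξ f n (k - 1) ω + f (ξ (k - 1) ω)
        - (1 / (n : ℝ)) * (P[Vblock ξ f (k - 1) n | pastFiltration ξ (k - 1)]) ω := by
    intro k
    have hV0 : (P[Vblock ξ f (k - 1) 0 | pastFiltration ξ (k - 1)]) = 0 := by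
      have h0 : Vblock ξ f (k - 1) 0 = (0 : Ω → ℝ) := by
        funext ω; simp [Vblock]
      rw [h0, condExp_zero]
    filter_upwards [hD1 k, htheta (k - 1)] with ω e1 e2
    show thetaF P ξ f n k ω - (P[thetaF P ξ f n k | pastFiltration ξ (k - 1)]) ω = _
    rw [e1]
    have htel := Finset.sum_range_sub
      (f := fun i => (P[Vblock ξ f (k - 1) i | pastFiltration ξ (k - 1)]) ω) n
    rw [Finset.sum_sub_distrib] at htel
    have ha0 : (P[Vblock ξ f (k - 1) 0 | pastFiltration ξ (k - 1)]) ω = 0 := by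
      rw [hV0]; rfl
    have h4 : ∑ i ∈ Finset.range n,
          (P[Vblock ξ f (k - 1) (i + 1) | pastFiltration ξ (k - 1)]) ω
        = ∑ i ∈ Finset.range n,
            (P[Vblock ξ f (k - 1) i | pastFiltration ξ (k - 1)]) ω
          + (P[Vblock ξ f (k - 1) n | pastFiltration ξ (k - 1)]) ω := by
      linarith [htel, ha0]
    rw [h4, e2]
    ring
  have hM : (fun ω => ∑ i ∈ Finset.Icc 1 n, Dmart P ξ f n (i : ℤ) ω) =ᵐ[P] fun ω =>
      (Spart ξ f n ω
        + (1 / (n : ℝ)) * ∑ i ∈ Finset.range n,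
            (P[Vblock ξ f (n : ℤ) i | pastFiltration ξ (n : ℤ)]) ω
        - (1 / (n : ℝ)) * ∑ i ∈ Finset.range n,
            (P[Vblock ξ f 0 i | pastFiltration ξ 0]) ω)
        - (1 / (n : ℝ)) * ∑ j ∈ Finset.range n,
            (P[Vblock ξ f (j : ℤ) n | pastFiltration ξ (j : ℤ)]) ω := by
    filter_upwards [ae_all_iff.mpr hD, htheta (n : ℤ), htheta 0] with ω hDω hθn hθ0
    have hstep : ∀ j : ℕ, Dmart P ξ f n ((j : ℤ) + 1) ω
        = thetaF P ξ f n ((j : ℤ) + 1) ω - thetaF P ξ f n (j : ℤ) ω + f (ξ (j : ℤ) ω)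
          - (1 / (n : ℝ)) * (P[Vblock ξ f (j : ℤ) n | pastFiltration ξ (j : ℤ)]) ω := by
      intro j
      have h := hDω ((j : ℤ) + 1)
      rw [show ((j : ℤ) + 1) - 1 = (j : ℤ) from by ring] at h
      exact h
    rw [sum_Icc_cast n (fun z => Dmart P ξ f n z ω),
      Finset.sum_congr rfl fun j _ => hstep j, Finset.sum_sub_distrib,
      Finset.sum_add_distrib]
    have hb : ∑ j ∈ Finset.range n,
          (thetaF P ξ f n ((j : ℤ) + 1) ω - thetaF P ξ f n (j : ℤ) ω)
        = thetaF P ξ f n (n : ℤ) ω - thetaF P ξ f n (0 : ℤ) ω := by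
      have h := Finset.sum_range_sub (f := fun j : ℕ => thetaF P ξ f n (j : ℤ) ω) n
      simp only [Nat.cast_zero] at h
      rw [← h]
      refine Finset.sum_congr rfl fun j _ => ?_
      norm_cast
    rw [hb]
    have hSp : Spart ξ f n ω = ∑ j ∈ Finset.range n, f (ξ (j : ℤ) ω)
        + f (ξ (n : ℤ) ω) - f (ξ (0 : ℤ) ω) := by
      have h1 : Spart ξ f n ω = ∑ j ∈ Finset.range n, f (ξ ((j : ℤ) + 1) ω) := by
        rw [spart_range]
      have h2 := Finset.sum_range_succ (fun j : ℕ => f (ξ (j : ℤ) ω)) n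
      have h3 := Finset.sum_range_succ' (fun j : ℕ => f (ξ (j : ℤ) ω)) n
      push_cast at h2 h3
      rw [h1]
      linarith [h2, h3]
    rw [hθn, hθ0, ← Finset.mul_sum]
    linarith [hSp]
  rw [eLpNorm_congr_ae hM]
  set B := (Finset.Icc 1 n).sup
    (fun i => eLpNorm (P[Spart ξ f i | pastFiltration ξ 0]) q P) with hB
  have hcesm : ∀ (k : ℤ) (m : ℕ),
      AEStronglyMeasurable (P[Vblock ξ f k m | pastFiltration ξ k]) P :=
    fun k m => (stronglyMeasurable_condExp.mono (hFle k)).aestronglyMeasurable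
  have hcn : (‖(1 / (n : ℝ))‖₊ : ℝ≥0∞) * (n : ℝ≥0∞) = 1 := by
    have h1 : ‖(1 / (n : ℝ))‖₊ * (n : ℝ≥0) = 1 := by
      apply NNReal.coe_injective
      push_cast
      rw [Real.norm_eq_abs, abs_of_nonneg (by positivity)]
      field_simp
    rw [← ENNReal.coe_natCast, ← ENNReal.coe_mul, h1, ENNReal.coe_one]
  -- generic bound for `(1/n) * sum` of n conditional expectations each bounded by B
  have hgen : ∀ (g : ℕ → Ω → ℝ),
      (∀ i, AEStronglyMeasurable (g i) P) →
      (∀ i ∈ Finset.range n, eLpNorm (g i) q P ≤ B) →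
      eLpNorm (fun ω => (1 / (n : ℝ)) * ∑ i ∈ Finset.range n, g i ω) q P ≤ B := by
    intro g hgsm hgle
    have heq : (fun ω => (1 / (n : ℝ)) * ∑ i ∈ Finset.range n, g i ω)
        = (1 / (n : ℝ)) • (∑ i ∈ Finset.range n, g i) := by
      funext ω
      simp [Finset.sum_apply]
    rw [heq, eLpNorm_const_smul]
    have hsle : eLpNorm (∑ i ∈ Finset.range n, g i) q P
        ≤ ∑ i ∈ Finset.range n, eLpNorm (g i) q P :=
      eLpNorm_sum_le (fun i _ => hgsm i) hq1
    have hs2 : ∑ i ∈ Finset.range n, eLpNorm (g i) q P ≤ (n : ℝ≥0∞) * B := by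
      calc ∑ i ∈ Finset.range n, eLpNorm (g i) q P ≤ ∑ _i ∈ Finset.range n, B :=
            Finset.sum_le_sum hgle
        _ = (n : ℝ≥0∞) * B := by rw [Finset.sum_const, Finset.card_range, nsmul_eq_mul]
    calc ‖(1 / (n : ℝ))‖₊ • eLpNorm (∑ i ∈ Finset.range n, g i) q P
        = (‖(1 / (n : ℝ))‖₊ : ℝ≥0∞) * eLpNorm (∑ i ∈ Finset.range n, g i) q P := rfl
      _ ≤ (‖(1 / (n : ℝ))‖₊ : ℝ≥0∞) * ((n : ℝ≥0∞) * B) :=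
          mul_le_mul_right (hsle.trans hs2) _
      _ = ((‖(1 / (n : ℝ))‖₊ : ℝ≥0∞) * (n : ℝ≥0∞)) * B := by ring
      _ = B := by rw [hcn, one_mul]
  have hb1 : ∀ k : ℤ, eLpNorm (fun ω => (1 / (n : ℝ)) * ∑ i ∈ Finset.range n,
      (P[Vblock ξ f k i | pastFiltration ξ k]) ω) q P ≤ B := by
    intro k
    refine hgen _ (fun i => hcesm k i) fun i hi => ?_
    rw [hVnorm k i]
    rcases Nat.eq_zero_or_pos i with h0 | h0
    · subst h0
      have h1 : Spart ξ f 0 = (0 : Ω → ℝ) := by funext ω; simp [Spart]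
      rw [h1, condExp_zero]
      simp
    · rw [hB]
      exact Finset.le_sup (s := Finset.Icc 1 n)
        (f := fun i => eLpNorm (P[Spart ξ f i | pastFiltration ξ 0]) q P)
        (Finset.mem_Icc.mpr ⟨h0, (Finset.mem_range.mp hi).le⟩)
  have hb2 : eLpNorm (fun ω => (1 / (n : ℝ)) * ∑ j ∈ Finset.range n,
      (P[Vblock ξ f (j : ℤ) n | pastFiltration ξ (j : ℤ)]) ω) q P ≤ B := by
    refine hgen _ (fun j => hcesm (j : ℤ) n) fun j _ => ?_
    rw [hVnorm (j : ℤ) n]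
    rw [hB]
    exact Finset.le_sup (s := Finset.Icc 1 n)
      (f := fun i => eLpNorm (P[Spart ξ f i | pastFiltration ξ 0]) q P)
      (Finset.mem_Icc.mpr ⟨hn, le_rfl⟩)
  have hSpsm : AEStronglyMeasurable (Spart ξ f n) P := by
    have : Measurable (Spart ξ f n) := by
      show Measurable fun ω => ∑ i ∈ Finset.Icc 1 n, f (ξ (i : ℤ) ω)
      exact Finset.measurable_sum _ fun i _ => hf.comp (hmeas _)
    exact this.aestronglyMeasurable
  have hG1sm : AEStronglyMeasurable (fun ω => (1 / (n : ℝ)) * ∑ i ∈ Finset.range n,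
      (P[Vblock ξ f (n : ℤ) i | pastFiltration ξ (n : ℤ)]) ω) P :=
    ((Finset.aestronglyMeasurable_fun_sum _ fun i _ => hcesm (n : ℤ) i).const_mul _)
  have hG2sm : AEStronglyMeasurable (fun ω => (1 / (n : ℝ)) * ∑ i ∈ Finset.range n,
      (P[Vblock ξ f 0 i | pastFiltration ξ 0]) ω) P :=
    ((Finset.aestronglyMeasurable_fun_sum _ fun i _ => hcesm 0 i).const_mul _)
  have hG3sm : AEStronglyMeasurable (fun ω => (1 / (n : ℝ)) * ∑ j ∈ Finset.range n,
      (P[Vblock ξ f (j : ℤ) n | pastFiltration ξ (j : ℤ)]) ω) P :=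
    ((Finset.aestronglyMeasurable_fun_sum (Finset.range n)
      (f := fun (j : ℕ) => P[Vblock ξ f (j : ℤ) n | pastFiltration ξ (j : ℤ)])
      fun j _ => hcesm (j : ℤ) n).const_mul _)
  have t1 := eLpNorm_sub_le (μ := P) (p := q)
    ((hSpsm.add hG1sm).sub hG2sm) hG3sm hq1
  have t2 := eLpNorm_sub_le (μ := P) (p := q) (hSpsm.add hG1sm) hG2sm hq1
  have t3 := eLpNorm_add_le (μ := P) (p := q) hSpsm hG1sm hq1
  refine le_trans t1 ?_
  refine le_trans (add_le_add_left t2 _) ?_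
  refine le_trans (add_le_add_left (add_le_add_left t3 _) _) ?_
  refine le_trans (add_le_add (add_le_add (add_le_add_right (hb1 (n : ℤ)) _) (hb1 0)) hb2) ?_
  apply le_of_eq
  ring
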